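/- arXiv:2002.12436 — 3 statements merged into one kernel-verified Lean document; each statement's English description precedes it below -/
import Mathlib

section
/- Fix u > 1 and define g(α) = α/(u^α − 1) for α > 0. Then g is strictly decreasing and strictly convex in α. -/
open Set Real

/-- `sinh s < s * cosh s` for `s > 0`. -/
lemma sinh_lt_mul_cosh {s : ℝ} (hs : 0 < s) : Real.sinh s < s * Real.cosh s := by
  have hmono : StrictMonoOn (fun x : ℝ => x * Real.cosh x - Real.sinh x) (Ici (0:ℝ)) := by
    apply strictMonoOn_of_deriv_pos (convex_Ici 0)
    · fun_prop
    · intro x hx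
      rw [interior_Ici] at hx
      have hx' : (0:ℝ) < x := hx
      have h1 : HasDerivAt (fun x : ℝ => x * Real.cosh x - Real.sinh x)
          (1 * Real.cosh x + x * Real.sinh x - Real.cosh x) x :=
        ((hasDerivAt_id x).mul (Real.hasDerivAt_cosh x)).sub (Real.hasDerivAt_sinh x)
      rw [h1.deriv]
      have : 0 < x * Real.sinh x := mul_pos hx' (by positivity)
      linarith
  have := hmono (self_mem_Ici) (le_of_lt hs : (0:ℝ) ≤ s) hs
  simp only [Real.sinh_zero, Real.cosh_zero, zero_mul, sub_zero, zero_sub, neg_zero] at this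
  linarith

/-- Key inequality: `2 * (exp t - 1) < t * (exp t + 1)` for `t > 0`. -/
lemma key_ineq {t : ℝ} (ht : 0 < t) : 2 * (Real.exp t - 1) < t * (Real.exp t + 1) := by
  have hs : 0 < t / 2 := by linarith
  have h := sinh_lt_mul_cosh hs
  rw [Real.sinh_eq, Real.cosh_eq] at h
  have hE : Real.exp t = Real.exp (t/2) * Real.exp (t/2) := by
    rw [← Real.exp_add]; ring_nf
  have hpos : 0 < Real.exp (t/2) := Real.exp_pos _
  have hinv : Real.exp (-(t/2)) = (Real.exp (t/2))⁻¹ := by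
    rw [Real.exp_neg]
  rw [hinv] at h
  have h2 : Real.exp (t/2) - (Real.exp (t/2))⁻¹ < t/2 * (Real.exp (t/2) + (Real.exp (t/2))⁻¹) := by
    have := mul_lt_mul_of_pos_left h (by norm_num : (0:ℝ) < 2)
    calc Real.exp (t/2) - (Real.exp (t/2))⁻¹
        = 2 * ((Real.exp (t/2) - (Real.exp (t/2))⁻¹)/2) := by ring
      _ < 2 * (t/2 * ((Real.exp (t/2) + (Real.exp (t/2))⁻¹)/2)) := this
      _ = t/2 * (Real.exp (t/2) + (Real.exp (t/2))⁻¹) := by ring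
  have h3 := mul_lt_mul_of_pos_left h2 hpos
  have hii : Real.exp (t/2) * (Real.exp (t/2))⁻¹ = 1 := mul_inv_cancel₀ (ne_of_gt hpos)
  rw [hE]
  nlinarith [h3, hii]

/-- For fixed `u > 1`, the function `g(α) = α / (u^α - 1)` is strictly
decreasing and strictly convex on `(0, ∞)`. -/
theorem stmt_5 (u : ℝ) (hu : 1 < u) :
    StrictAntiOn (fun a : ℝ => a / (u ^ a - 1)) (Ioi (0:ℝ)) ∧
    StrictConvexOn ℝ (Ioi (0:ℝ)) (fun a : ℝ => a / (u ^ a - 1)) := by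
  have hu0 : (0:ℝ) < u := lt_trans zero_lt_one hu
  set c := Real.log u with hcdef
  have hc : 0 < c := Real.log_pos hu
  -- rewrite the function
  have hfeq : (fun a : ℝ => a / (u ^ a - 1)) = (fun a : ℝ => a / (Real.exp (c * a) - 1)) := by
    funext a
    rw [Real.rpow_def_of_pos hu0]
  rw [hfeq]
  set F : ℝ → ℝ := fun a => a / (Real.exp (c * a) - 1) with hF
  set F1 : ℝ → ℝ := fun a =>
    (1 * (Real.exp (c * a) - 1) - a * (c * Real.exp (c * a))) / (Real.exp (c * a) - 1) ^ 2
    with hF1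
  -- basic facts on `Ioi 0`
  have hE : ∀ a : ℝ, HasDerivAt (fun a => Real.exp (c * a)) (c * Real.exp (c * a)) a := by
    intro a
    have h1 : HasDerivAt (fun a : ℝ => c * a) c a := by
      simpa using (hasDerivAt_id a).const_mul c
    simpa [mul_comm] using h1.exp
  have he1 : ∀ a ∈ Ioi (0:ℝ), 1 < Real.exp (c * a) := by
    intro a ha
    have : (0:ℝ) < c * a := mul_pos hc ha
    exact Real.one_lt_exp_iff.2 this
  have hden : ∀ a ∈ Ioi (0:ℝ), Real.exp (c * a) - 1 ≠ 0 := by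
    intro a ha
    have := he1 a ha
    linarith
  -- F has derivative F1 on Ioi 0
  have hdF : ∀ a ∈ Ioi (0:ℝ), HasDerivAt F
      ((1 * (Real.exp (c * a) - 1) - a * (c * Real.exp (c * a))) / (Real.exp (c * a) - 1) ^ 2) a := by
    intro a ha
    exact (hasDerivAt_id a).div ((hE a).sub_const 1) (hden a ha)
  have hderivF : Set.EqOn (deriv F) F1 (Ioi (0:ℝ)) := by
    intro a ha
    exact (hdF a ha).deriv
  -- continuity of F on Ioi 0
  have hcontF : ContinuousOn F (Ioi (0:ℝ)) := by
    apply ContinuousOn.div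
    · fun_prop
    · fun_prop
    · exact hden
  -- numerator of F1 is negative on Ioi 0
  have hnum_neg : ∀ a ∈ Ioi (0:ℝ),
      1 * (Real.exp (c * a) - 1) - a * (c * Real.exp (c * a)) < 0 := by
    intro a ha
    have ht : 0 < c * a := mul_pos hc ha
    -- exp t - 1 - t * exp t < 0  ⟺  (1 - t) < exp (-t)
    have h1 : -(c * a) + 1 < Real.exp (-(c * a)) :=
      Real.add_one_lt_exp (neg_ne_zero.mpr (ne_of_gt ht))
    have h2 := mul_lt_mul_of_pos_left h1 (Real.exp_pos (c * a))
    rw [← Real.exp_add] at h2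
    simp only [add_neg_cancel, Real.exp_zero] at h2
    nlinarith [Real.exp_pos (c * a)]
  constructor
  · -- strictly decreasing
    apply strictAntiOn_of_deriv_neg (convex_Ioi 0) hcontF
    intro a ha
    rw [interior_Ioi] at ha
    rw [hderivF ha]
    have he := he1 a ha
    apply div_neg_of_neg_of_pos (hnum_neg a ha)
    exact pow_pos (by linarith) 2
  · -- strictly convex
    apply StrictMonoOn.strictConvexOn_of_deriv (convex_Ioi 0) hcontF
    rw [interior_Ioi]
    apply strictMonoOn_of_deriv_pos (convex_Ioi 0)
    · exact ContinuousOn.congr (by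
        apply ContinuousOn.div
        · fun_prop
        · fun_prop
        · intro a ha
          have := he1 a ha
          have : Real.exp (c * a) - 1 > 0 := by linarith
          positivity) hderivF
    · intro a ha
      rw [interior_Ioi] at ha
      have hEq : deriv F =ᶠ[nhds a] F1 :=
        Filter.eventuallyEq_of_mem (Ioi_mem_nhds ha) hderivF
      rw [Filter.EventuallyEq.deriv_eq hEq]
      -- compute derivative of F1 at a
      set e := Real.exp (c * a) with hedef
      have he := he1 a ha
      have hd1 : Real.exp (c * a) - 1 ≠ 0 := hden a ha
      have hNd : HasDerivAt (fun a => 1 * (Real.exp (c * a) - 1) - a * (c * Real.exp (c * a)))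
          ((c * e) - (1 * (c * e) + a * (c * (c * e)))) a := by
        have h1 : HasDerivAt (fun a => 1 * (Real.exp (c * a) - 1)) (c * e) a := by
          simpa using ((hE a).sub_const 1).const_mul 1
        have h2 : HasDerivAt (fun a => a * (c * Real.exp (c * a)))
            (1 * (c * e) + a * (c * (c * e))) a :=
          (hasDerivAt_id a).mul ((hE a).const_mul c)
        exact h1.sub h2
      have hDd : HasDerivAt (fun a => (Real.exp (c * a) - 1) ^ 2)
          (2 * (e - 1) ^ 1 * (c * e)) a := by
        have := ((hE a).sub_const 1).pow 2
        exact this.congr_deriv (by rw [hedef]; norm_num)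
      have hF1d : HasDerivAt F1
          ((((c * e) - (1 * (c * e) + a * (c * (c * e)))) * ((e - 1) ^ 2)
            - (1 * (e - 1) - a * (c * e)) * (2 * (e - 1) ^ 1 * (c * e))) / ((e - 1) ^ 2) ^ 2) a :=
        hNd.div hDd (by positivity)
      rw [hF1d.deriv]
      -- positivity of the second derivative
      have hkey := key_ineq (mul_pos hc ha)
      rw [← hedef] at hkey
      have hnum : (((c * e) - (1 * (c * e) + a * (c * (c * e)))) * ((e - 1) ^ 2)
            - (1 * (e - 1) - a * (c * e)) * (2 * (e - 1) ^ 1 * (c * e)))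
          = c * e * (e - 1) * ((c * a) * (e + 1) - 2 * (e - 1)) := by ring
      rw [hnum]
      have hesub : 0 < e - 1 := by linarith
      have hepos : 0 < e := by linarith
      apply div_pos
      · apply mul_pos (by positivity)
        linarith
      · positivity
end

section
/- Let X_1,...,X_n and Y_1,...,Y_n be two sets of n independent Pareto-distributed random variables with survival functions F̄_i(x) = (1 + x/θ)^{-α_i} and Ḡ_i(x) = (1 + x/θ)^{-α_i*} respectively (x > 0, θ > 0, α_i > 0, α_i* > 0). If (α_1,...,α_n) is weakly supermajorized by (α_1*,...,α_n*), then X_{n:n} ≤_rh Y_{n:n}, i.e., the reversed hazard rate of max{X_i} is pointwise at most that of max{Y_i}. -/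
open Set Finset

/-- The sum of the `k` smallest entries of `a`, expressed as the infimum of
sums over `k`-element subsets. -/
noncomputable def kSmallestSum (n k : ℕ) (a : Fin n → ℝ) : ℝ :=
  sInf {s | ∃ S : Finset (Fin n), S.card = k ∧ s = ∑ i ∈ S, a i}

/-- `a` is weakly supermajorized by `b` (`a ≺^w b`): for every `k`, the sum of
the `k` smallest entries of `a` is at least that of `b`. -/
def WeaklySupermajorizedBy (n : ℕ) (a b : Fin n → ℝ) : Prop :=
  ∀ k ≤ n, kSmallestSum n k b ≤ kSmallestSum n k a


lemma fin_le_of_strictMono {k n : ℕ} (f : Fin k → Fin n) (hf : StrictMono f) :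
    ∀ (m : ℕ) (h : m < k), m ≤ (f ⟨m, h⟩ : ℕ) := by
  intro m
  induction m with
  | zero => intro h; exact Nat.zero_le _
  | succ p ih =>
    intro h
    have hp : p < k := Nat.lt_of_succ_lt h
    have h1 := ih hp
    have h2 : f ⟨p, hp⟩ < f ⟨p + 1, h⟩ := hf (by simp [Fin.lt_def])
    have h3 := Fin.lt_def.mp h2
    omega

lemma sum_sorted_le {n k : ℕ} (g : Fin n → ℝ) (hg : Monotone g)
    (hk : k ≤ n) (T : Finset (Fin n)) (hT : T.card = k) :
    ∑ j : Fin k, g (Fin.castLE hk j) ≤ ∑ i ∈ T, g i := by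
  set e := T.orderIsoOfFin hT with he
  rw [← Finset.sum_coe_sort T (fun i => g i)]
  rw [← e.toEquiv.sum_comp (fun i : T => g i)]
  apply Finset.sum_le_sum
  intro j _
  apply hg
  have hsm : StrictMono (fun j : Fin k => ((e j : T) : Fin n)) := by
    intro u v huv
    exact e.strictMono huv
  have := fin_le_of_strictMono _ hsm j.1 j.2
  simp only [Fin.le_def, Fin.coe_castLE]
  exact this

lemma kSmallestSum_eq {n k : ℕ} (hk : k ≤ n) (f : Fin n → ℝ) :
    sInf {s | ∃ S : Finset (Fin n), S.card = k ∧ s = ∑ i ∈ S, f i}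
      = ∑ j : Fin k, f (Tuple.sort f (Fin.castLE hk j)) := by
  have hinj : Function.Injective (fun j : Fin k => Tuple.sort f (Fin.castLE hk j)) :=
    fun u v h => (Fin.castLE_injective hk) ((Tuple.sort f).injective h)
  apply IsLeast.csInf_eq
  constructor
  · refine ⟨Finset.image (fun j : Fin k => Tuple.sort f (Fin.castLE hk j)) Finset.univ, ?_, ?_⟩
    · rw [Finset.card_image_of_injective _ hinj, Finset.card_univ, Fintype.card_fin]
    · rw [Finset.sum_image fun u _ v _ h => hinj h]
  · rintro s ⟨S, hS, rfl⟩
    have hT : (S.image (Tuple.sort f).symm).card = k := by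
      rw [Finset.card_image_of_injective _ (Tuple.sort f).symm.injective, hS]
    have hsum : ∑ j ∈ S.image (Tuple.sort f).symm, f (Tuple.sort f j) = ∑ i ∈ S, f i := by
      rw [Finset.sum_image fun u _ v _ h => (Tuple.sort f).symm.injective h]
      simp
    rw [← hsum]
    exact sum_sorted_le (f ∘ Tuple.sort f) (Tuple.monotone_sort f) hk _ hT


noncomputable def phiP (s t : ℝ) : ℝ := t / (Real.exp (s * t) - 1)
noncomputable def psiP (s t : ℝ) : ℝ :=
  (1 * (Real.exp (s * t) - 1) - t * (Real.exp (s * t) * s)) / (Real.exp (s * t) - 1) ^ 2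

lemma expst_pos (s t : ℝ) : 0 < Real.exp (s * t) := Real.exp_pos _

lemma denom_pos {s t : ℝ} (hs : 0 < s) (ht : 0 < t) : 0 < Real.exp (s * t) - 1 := by
  have h := Real.add_one_le_exp (s * t)
  nlinarith [mul_pos hs ht]

lemma hasDerivAt_E (s t : ℝ) :
    HasDerivAt (fun u => Real.exp (s * u)) (Real.exp (s * t) * s) t := by
  have h1 : HasDerivAt (fun u : ℝ => s * u) s t := by
    simpa using (hasDerivAt_id t).const_mul s
  exact h1.exp

lemma hasDerivAt_phiP {s t : ℝ} (hs : 0 < s) (ht : 0 < t) :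
    HasDerivAt (phiP s) (psiP s t) t := by
  have hd := (hasDerivAt_E s t).sub_const 1
  exact (hasDerivAt_id t).div hd (ne_of_gt (denom_pos hs ht))

lemma psiP_nonpos {s t : ℝ} (hs : 0 < s) (ht : 0 < t) : psiP s t ≤ 0 := by
  apply div_nonpos_of_nonpos_of_nonneg _ (sq_nonneg _)
  have h1 : Real.exp (-(s * t)) * Real.exp (s * t) = 1 := by
    rw [← Real.exp_add]; simp
  have h2 : 1 - s * t ≤ Real.exp (-(s * t)) := by
    have := Real.add_one_le_exp (-(s * t)); linarith
  nlinarith [Real.exp_pos (s * t)]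

-- derivative of psiP
noncomputable def psidP (s t : ℝ) : ℝ :=
  ((Real.exp (s * t) * s - (1 * s * Real.exp (s * t) + t * s * (Real.exp (s * t) * s))) *
      (Real.exp (s * t) - 1) ^ 2 -
    (1 * (Real.exp (s * t) - 1) - t * (Real.exp (s * t) * s)) *
      (2 * (Real.exp (s * t) - 1) ^ 1 * (Real.exp (s * t) * s))) /
    ((Real.exp (s * t) - 1) ^ 2) ^ 2

lemma hasDerivAt_psiP {s t : ℝ} (hs : 0 < s) (ht : 0 < t) :
    HasDerivAt (psiP s) (psidP s t) t := by
  have hE := hasDerivAt_E s t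
  have hnum : HasDerivAt (fun u => 1 * (Real.exp (s * u) - 1) - u * (Real.exp (s * u) * s))
      (Real.exp (s * t) * s - (1 * s * Real.exp (s * t) + t * s * (Real.exp (s * t) * s))) t := by
    have h1 : HasDerivAt (fun u : ℝ => 1 * (Real.exp (s * u) - 1)) (Real.exp (s * t) * s) t := by
      simpa using (hE.sub_const 1).const_mul 1
    have h2 : HasDerivAt (fun u : ℝ => u * (Real.exp (s * u) * s))
        (1 * (Real.exp (s * t) * s) + t * (Real.exp (s * t) * s * s)) t :=
      (hasDerivAt_id t).mul (hE.mul_const s)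
    have := h1.sub h2
    refine this.congr_deriv ?_
    ring
  have hden : HasDerivAt (fun u => (Real.exp (s * u) - 1) ^ 2)
      (2 * (Real.exp (s * t) - 1) ^ 1 * (Real.exp (s * t) * s)) t := (hE.sub_const 1).pow 2
  have hne : (Real.exp (s * t) - 1) ^ 2 ≠ 0 := pow_ne_zero _ (ne_of_gt (denom_pos hs ht))
  exact hnum.div hden hne

lemma q_deriv (u : ℝ) :
    HasDerivAt (fun v => (v - 2) * Real.exp v + v + 2) ((u - 1) * Real.exp u + 1) u := by
  have h1 : HasDerivAt (fun v : ℝ => (v - 2) * Real.exp v)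
      (1 * Real.exp u + (u - 2) * Real.exp u) u :=
    ((hasDerivAt_id u).sub_const 2).mul (Real.hasDerivAt_exp u)
  have h2 : HasDerivAt (fun v : ℝ => (v - 2) * Real.exp v + v + 2)
      (1 * Real.exp u + (u - 2) * Real.exp u + 1) u := by
    simpa using (h1.add (hasDerivAt_id u)).add_const 2
  convert h2 using 1
  ring


lemma q_nonneg {u : ℝ} (hu : 0 ≤ u) : 0 ≤ (u - 2) * Real.exp u + u + 2 := by
  rcases eq_or_lt_of_le hu with h | h
  · simp [← h]
  · have hcont : ContinuousOn (fun v => (v - 2) * Real.exp v + v + 2) (Icc 0 u) :=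
      fun v _ => (q_deriv v).continuousAt.continuousWithinAt
    obtain ⟨ξ, hξ, heq⟩ := exists_hasDerivAt_eq_slope (fun v => (v - 2) * Real.exp v + v + 2)
      (fun v => (v - 1) * Real.exp v + 1) h hcont (fun v _ => q_deriv v)
    have hq0 : (0 - 2 : ℝ) * Real.exp 0 + 0 + 2 = 0 := by simp
    have hd : 0 ≤ (ξ - 1) * Real.exp ξ + 1 := by
      have h1 : Real.exp (-ξ) * Real.exp ξ = 1 := by rw [← Real.exp_add]; simp
      have h2 : 1 - ξ ≤ Real.exp (-ξ) := by have := Real.add_one_le_exp (-ξ); linarith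
      nlinarith [Real.exp_pos ξ]
    rw [hq0] at heq
    have hupos : 0 < u - 0 := by linarith
    rw [heq] at hd
    have h3 := mul_nonneg hd (le_of_lt hupos)
    rw [div_mul_cancel₀ _ (ne_of_gt hupos)] at h3
    linarith

lemma psidP_nonneg {s t : ℝ} (hs : 0 < s) (ht : 0 < t) : 0 ≤ psidP s t := by
  unfold psidP
  apply div_nonneg _ (sq_nonneg _)
  have hE := Real.exp_pos (s * t)
  have hden := denom_pos hs ht
  have hq := q_nonneg (u := s * t) (le_of_lt (mul_pos hs ht))
  have key : (Real.exp (s * t) * s - (1 * s * Real.exp (s * t) + t * s * (Real.exp (s * t) * s))) *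
      (Real.exp (s * t) - 1) ^ 2 -
    (1 * (Real.exp (s * t) - 1) - t * (Real.exp (s * t) * s)) *
      (2 * (Real.exp (s * t) - 1) ^ 1 * (Real.exp (s * t) * s)) =
      (Real.exp (s * t) - 1) * Real.exp (s * t) * s *
        ((s * t - 2) * Real.exp (s * t) + s * t + 2) := by ring
  rw [key]
  positivity

lemma psiP_mono {s u v : ℝ} (hs : 0 < s) (hu : 0 < u) (huv : u ≤ v) :
    psiP s u ≤ psiP s v := by
  rcases eq_or_lt_of_le huv with h | h
  · rw [h]
  · have hcont : ContinuousOn (psiP s) (Icc u v) := fun w hw =>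
      (hasDerivAt_psiP hs (lt_of_lt_of_le hu hw.1)).continuousAt.continuousWithinAt
    obtain ⟨ξ, hξ, heq⟩ := exists_hasDerivAt_eq_slope (psiP s) (psidP s) h hcont
      (fun w hw => hasDerivAt_psiP hs (lt_trans hu hw.1))
    have hd : 0 ≤ psidP s ξ := psidP_nonneg hs (lt_trans hu hξ.1)
    rw [heq] at hd
    have hvu : 0 < v - u := by linarith
    have h3 := mul_nonneg hd (le_of_lt hvu)
    rw [div_mul_cancel₀ _ (ne_of_gt hvu)] at h3
    linarith

lemma phiP_tangent {s u v : ℝ} (hs : 0 < s) (hu : 0 < u) (hv : 0 < v) :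
    phiP s u - phiP s v ≤ psiP s u * (u - v) := by
  rcases lt_trichotomy u v with h | h | h
  · -- u < v : MVT on [u,v]
    have hcont : ContinuousOn (phiP s) (Icc u v) := fun w hw =>
      (hasDerivAt_phiP hs (lt_of_lt_of_le hu hw.1)).continuousAt.continuousWithinAt
    obtain ⟨ξ, hξ, heq⟩ := exists_hasDerivAt_eq_slope (phiP s) (psiP s) h hcont
      (fun w hw => hasDerivAt_phiP hs (lt_trans hu hw.1))
    have hmono : psiP s u ≤ psiP s ξ := psiP_mono hs hu (le_of_lt hξ.1)
    have hvu : 0 < v - u := by linarith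
    have h3 : phiP s v - phiP s u = psiP s ξ * (v - u) := by
      field_simp at heq
      rw [heq]
    nlinarith
  · rw [h]; simp
  · -- v < u : MVT on [v,u]
    have hcont : ContinuousOn (phiP s) (Icc v u) := fun w hw =>
      (hasDerivAt_phiP hs (lt_of_lt_of_le hv hw.1)).continuousAt.continuousWithinAt
    obtain ⟨ξ, hξ, heq⟩ := exists_hasDerivAt_eq_slope (phiP s) (psiP s) h hcont
      (fun w hw => hasDerivAt_phiP hs (lt_trans hv hw.1))
    have hmono : psiP s ξ ≤ psiP s u := psiP_mono hs (lt_trans hv hξ.1) (le_of_lt hξ.2)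
    have hvu : 0 < u - v := by linarith
    have h3 : phiP s u - phiP s v = psiP s ξ * (u - v) := by
      field_simp at heq
      rw [heq]
    nlinarith

lemma abel_bound (c D : ℕ → ℝ) (hc : Monotone c) :
    ∀ n : ℕ, D 0 = 0 → (∀ k ≤ n, 0 ≤ D k) →
      ∑ j ∈ Finset.range n, c j * (D (j + 1) - D j) ≤ c n * D n := by
  intro n
  induction n with
  | zero => intro h0 _; simp [h0]
  | succ m ih =>
    intro h0 hD
    have hm := ih h0 (fun k hk => hD k (Nat.le_succ_of_le hk))
    rw [Finset.sum_range_succ]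
    have h1 : c m * D (m + 1) ≤ c (m + 1) * D (m + 1) :=
      mul_le_mul_of_nonneg_right (hc (Nat.le_succ m)) (hD (m + 1) le_rfl)
    nlinarith [hD (m+1) le_rfl]

/-- Weak supermajorization of shape parameters yields reversed hazard rate
ordering of maxima of independent Pareto samples: the reversed hazard rate of
`X_{n:n}`, namely `(1/(x+θ)) ∑ αᵢ/((x/θ+1)^{αᵢ} - 1)`, is pointwise at most
that of `Y_{n:n}`. -/
theorem stmt_6 (n : ℕ) (θ : ℝ) (hθ : 0 < θ)
    (a astar : Fin n → ℝ)
    (ha : ∀ i, 0 < a i) (hastar : ∀ i, 0 < astar i)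
    (hmaj : WeaklySupermajorizedBy n a astar) :
    ∀ x : ℝ, 0 < x →
      (1 / (x + θ)) * ∑ i, a i / ((x / θ + 1) ^ (a i) - 1) ≤
        (1 / (x + θ)) * ∑ i, astar i / ((x / θ + 1) ^ (astar i) - 1) := by
  intro x hx
  rcases Nat.eq_zero_or_pos n with hn | hn
  · subst hn; simp
  have hxθ : (0:ℝ) < x / θ := div_pos hx hθ
  have hb1 : (1:ℝ) < x / θ + 1 := by linarith
  have hbpos : (0:ℝ) < x / θ + 1 := by linarith
  set s := Real.log (x / θ + 1) with hs_def
  have hs : 0 < s := Real.log_pos hb1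
  have hrw : ∀ t : ℝ, (x / θ + 1) ^ t = Real.exp (s * t) := fun t => by
    rw [Real.rpow_def_of_pos hbpos]
  have hfac : (0:ℝ) ≤ 1 / (x + θ) := by positivity
  apply mul_le_mul_of_nonneg_left _ hfac
  have hA : (∑ i, a i / ((x / θ + 1) ^ (a i) - 1)) = ∑ i, phiP s (a i) := by
    apply Finset.sum_congr rfl; intro i _; rw [hrw]; rfl
  have hB : (∑ i, astar i / ((x / θ + 1) ^ (astar i) - 1)) = ∑ i, phiP s (astar i) := by
    apply Finset.sum_congr rfl; intro i _; rw [hrw]; rfl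
  rw [hA, hB]
  -- sorted sequences extended to ℕ
  set σa := Tuple.sort a with hσa
  set σb := Tuple.sort astar with hσb
  have hminlt : ∀ j : ℕ, min j (n - 1) < n := fun j => by omega
  set ga : ℕ → ℝ := fun j => a (σa ⟨min j (n - 1), hminlt j⟩) with hga
  set gb : ℕ → ℝ := fun j => astar (σb ⟨min j (n - 1), hminlt j⟩) with hgb
  have hgamono : Monotone ga := by
    intro i j hij
    exact Tuple.monotone_sort a (a := (⟨min i (n-1), hminlt i⟩ : Fin n))
      (b := ⟨min j (n-1), hminlt j⟩) (by simp [Fin.le_def]; omega)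
  have hgapos : ∀ j, 0 < ga j := fun j => ha _
  have hgbpos : ∀ j, 0 < gb j := fun j => hastar _
  -- partial sums matching
  have hsortsum : ∀ (f : Fin n → ℝ) (k : ℕ) (hk : k ≤ n),
      (∑ j : Fin k, f (Tuple.sort f (Fin.castLE hk j)))
        = ∑ j ∈ Finset.range k, f (Tuple.sort f ⟨min j (n - 1), hminlt j⟩) := by
    intro f k hk
    rw [← Fin.sum_univ_eq_sum_range (fun j => f (Tuple.sort f ⟨min j (n - 1), hminlt j⟩)) k]
    apply Finset.sum_congr rfl
    intro j _
    congr 2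
    apply Fin.ext
    simp [Fin.coe_castLE]
    omega
  have hPS : ∀ k ≤ n, ∑ j ∈ Finset.range k, gb j ≤ ∑ j ∈ Finset.range k, ga j := by
    intro k hk
    have h := hmaj k hk
    unfold kSmallestSum at h
    rw [kSmallestSum_eq hk a, kSmallestSum_eq hk astar] at h
    rw [hsortsum a k hk, hsortsum astar k hk] at h
    exact h
  -- total sums as range sums
  have htotal : ∀ (f : Fin n → ℝ) (σ : Equiv.Perm (Fin n)) (g : ℕ → ℝ),
      (∀ j : Fin n, g j.val = f (σ j)) → ∑ i, phiP s (f i) = ∑ j ∈ Finset.range n, phiP s (g j) := by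
    intro f σ g hg
    rw [← Equiv.sum_comp σ (fun i => phiP s (f i))]
    rw [← Fin.sum_univ_eq_sum_range (fun j => phiP s (g j)) n]
    apply Finset.sum_congr rfl
    intro i _
    rw [hg i]
  have hgaeq : ∀ j : Fin n, ga j.val = a (σa j) := by
    intro j
    have hj := j.isLt
    show a (σa ⟨(j : ℕ) ⊓ (n - 1), hminlt j⟩) = a (σa j)
    have he : (⟨(j : ℕ) ⊓ (n - 1), hminlt j⟩ : Fin n) = j := Fin.ext (by simp only [Fin.val_mk]; omega)
    rw [he]
  have hgbeq : ∀ j : Fin n, gb j.val = astar (σb j) := by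
    intro j
    have hj := j.isLt
    show astar (σb ⟨(j : ℕ) ⊓ (n - 1), hminlt j⟩) = astar (σb j)
    have he : (⟨(j : ℕ) ⊓ (n - 1), hminlt j⟩ : Fin n) = j := Fin.ext (by simp only [Fin.val_mk]; omega)
    rw [he]
  rw [htotal a σa ga hgaeq, htotal astar σb gb hgbeq]
  -- main inequality
  set c : ℕ → ℝ := fun j => psiP s (ga j) with hc_def
  set D : ℕ → ℝ := fun k => ∑ j ∈ Finset.range k, (ga j - gb j) with hD_def
  have hc : Monotone c := fun i j hij => psiP_mono hs (hgapos i) (hgamono hij)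
  have hD0 : D 0 = 0 := by simp [hD_def]
  have hDk : ∀ k ≤ n, 0 ≤ D k := by
    intro k hk
    have := hPS k hk
    simp only [hD_def, Finset.sum_sub_distrib]
    linarith
  have habel := abel_bound c D hc n hD0 hDk
  have hdiff : ∀ j, D (j + 1) - D j = ga j - gb j := by
    intro j; simp only [hD_def, Finset.sum_range_succ, Finset.sum_sub_distrib]; ring
  have hstep : ∑ j ∈ Finset.range n, (phiP s (ga j) - phiP s (gb j))
      ≤ ∑ j ∈ Finset.range n, c j * (D (j + 1) - D j) := by
    apply Finset.sum_le_sum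
    intro j _
    rw [hdiff j]
    exact phiP_tangent hs (hgapos j) (hgbpos j)
  have hcn : c n ≤ 0 := psiP_nonpos hs (hgapos n)
  have hfinal : c n * D n ≤ 0 := mul_nonpos_of_nonpos_of_nonneg hcn (hDk n le_rfl)
  have hsub : ∑ j ∈ Finset.range n, (phiP s (ga j) - phiP s (gb j))
      = ∑ j ∈ Finset.range n, phiP s (ga j) - ∑ j ∈ Finset.range n, phiP s (gb j) :=
    Finset.sum_sub_distrib _ _
  linarith
end

section
/- Let X and Y be random variables with X ≤_disp Y and finite variances. Then Var(X) ≤ Var(Y). -/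
set_option linter.unusedSectionVars false

open Set MeasureTheory ProbabilityTheory Filter Topology

/-- The right-continuous quantile function of a probability measure on `ℝ`. -/
noncomputable def rcQuantile (μ : Measure ℝ) (t : ℝ) : ℝ :=
  sInf {x : ℝ | t ≤ (μ (Iic x)).toReal}

variable (μ : Measure ℝ) [IsProbabilityMeasure μ]

lemma rcQ_eq (t : ℝ) : rcQuantile μ t = sInf {x : ℝ | t ≤ cdf μ x} := by
  simp_rw [rcQuantile, cdf_eq_real, measureReal_def]

lemma rcQ_set_nonempty {t : ℝ} (ht : t < 1) : {x : ℝ | t ≤ cdf μ x}.Nonempty := by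
  have := (tendsto_cdf_atTop μ).eventually (eventually_ge_nhds ht)
  exact this.exists

lemma rcQ_set_bddBelow {t : ℝ} (ht : 0 < t) : BddBelow {x : ℝ | t ≤ cdf μ x} := by
  obtain ⟨y, hy⟩ := ((tendsto_cdf_atBot μ).eventually (eventually_lt_nhds ht)).exists
  exact ⟨y, fun z hz => le_of_not_gt fun h => absurd (le_trans hz ((cdf μ).mono h.le)) (not_le.2 hy)⟩

lemma rcQ_le_iff {t : ℝ} (ht : t ∈ Ioo (0:ℝ) 1) (x : ℝ) :
    rcQuantile μ t ≤ x ↔ t ≤ cdf μ x := by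
  have hne := rcQ_set_nonempty μ ht.2
  have hbdd := rcQ_set_bddBelow μ ht.1
  rw [rcQ_eq]
  constructor
  · intro h
    -- key: sInf belongs to the set, by right continuity
    have hmem : t ≤ cdf μ (sInf {x : ℝ | t ≤ cdf μ x}) := by
      set a := sInf {x : ℝ | t ≤ cdf μ x} with ha
      have hge : ∀ y ∈ Ioi a, t ≤ cdf μ y := by
        intro y hy
        obtain ⟨s, hs, hsy⟩ := (csInf_lt_iff hbdd hne).1 hy
        exact hs.trans ((cdf μ).mono hsy.le)
      have htends : Tendsto (cdf μ) (𝓝[>] a) (𝓝 (cdf μ a)) :=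
        ((cdf μ).right_continuous a).mono_left (nhdsWithin_mono a Ioi_subset_Ici_self)
      exact ge_of_tendsto htends (eventually_nhdsWithin_of_forall hge)
    exact hmem.trans ((cdf μ).mono h)
  · intro h
    exact csInf_le hbdd h

lemma rcQ_monotoneOn : MonotoneOn (rcQuantile μ) (Ioo (0:ℝ) 1) := by
  intro s hs t ht hst
  have h1 : t ≤ cdf μ (rcQuantile μ t) := (rcQ_le_iff μ ht _).1 le_rfl
  exact (rcQ_le_iff μ hs _).2 (hst.trans h1)

lemma rcQ_map :
    Measure.map (rcQuantile μ) (volume.restrict (Ioo (0:ℝ) 1)) = μ := by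
  have hmeas : AEMeasurable (rcQuantile μ) (volume.restrict (Ioo (0:ℝ) 1)) :=
    aemeasurable_restrict_of_monotoneOn measurableSet_Ioo (rcQ_monotoneOn μ)
  have : IsProbabilityMeasure (volume.restrict (Ioo (0:ℝ) 1)) := by
    constructor; simp
  have : IsProbabilityMeasure (Measure.map (rcQuantile μ) (volume.restrict (Ioo (0:ℝ) 1))) :=
    Measure.isProbabilityMeasure_map hmeas
  refine Measure.ext_of_Iic _ _ (fun x => ?_)
  rw [Measure.map_apply_of_aemeasurable hmeas measurableSet_Iic]
  have hpre : (Ioo (0:ℝ) 1) ∩ (rcQuantile μ) ⁻¹' (Iic x) = Ioo (0:ℝ) 1 ∩ Iic (cdf μ x) := by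
    ext t
    simp only [mem_inter_iff, mem_preimage, mem_Iic, and_congr_right_iff]
    intro ht
    exact rcQ_le_iff μ ht x
  rw [Measure.restrict_apply' measurableSet_Ioo, inter_comm, hpre]
  have h0 : (0:ℝ) ≤ cdf μ x := cdf_nonneg μ x
  have h1 : cdf μ x ≤ 1 := cdf_le_one μ x
  have hle : volume (Ioo (0:ℝ) 1 ∩ Iic (cdf μ x)) ≤ ENNReal.ofReal (cdf μ x) := by
    have : volume (Ioc (0:ℝ) (cdf μ x)) = ENNReal.ofReal (cdf μ x) := by
      rw [Real.volume_Ioc, sub_zero]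
    refine le_trans (measure_mono ?_) (le_of_eq this)
    rintro t ⟨⟨h1', _⟩, h2'⟩; exact ⟨h1', h2'⟩
  have hge : ENNReal.ofReal (cdf μ x) ≤ volume (Ioo (0:ℝ) 1 ∩ Iic (cdf μ x)) := by
    have : volume (Ioo (0:ℝ) (cdf μ x)) = ENNReal.ofReal (cdf μ x) := by
      rw [Real.volume_Ioo, sub_zero]
    refine le_trans (le_of_eq this.symm) (measure_mono ?_)
    rintro t ⟨h1', h2'⟩; exact ⟨⟨h1', lt_of_lt_of_le h2' h1⟩, h2'.le⟩
  rw [le_antisymm hle hge, ofReal_cdf]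


section
variable {P : Measure ℝ} [IsProbabilityMeasure P]

lemma var_identity (f : ℝ → ℝ) (hf : Integrable f P) (hf2 : Integrable (fun x => f x ^ 2) P) :
    ∫ p : ℝ × ℝ, (f p.1 - f p.2) ^ 2 ∂(P.prod P)
      = 2 * (∫ x, f x ^ 2 ∂P) - 2 * (∫ x, f x ∂P) ^ 2 := by
  have hff : Integrable (fun x => f x * f x) P := by simpa [sq] using hf2
  have I1 : Integrable (fun p : ℝ × ℝ => (f p.1 * f p.1) * (1:ℝ)) (P.prod P) :=
    hff.mul_prod (integrable_const 1)
  have I2 : Integrable (fun p : ℝ × ℝ => (1:ℝ) * (f p.2 * f p.2)) (P.prod P) :=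
    (integrable_const 1).mul_prod hff
  have I3 : Integrable (fun p : ℝ × ℝ => (2 * f p.1) * f p.2) (P.prod P) :=
    (hf.const_mul 2).mul_prod hf
  have hfun : (fun p : ℝ × ℝ => (f p.1 - f p.2) ^ 2)
      = fun p : ℝ × ℝ => ((f p.1 * f p.1) * (1:ℝ) + (1:ℝ) * (f p.2 * f p.2))
        - (2 * f p.1) * f p.2 := by
    funext p; ring
  have I12 : Integrable (fun p : ℝ × ℝ => (f p.1 * f p.1) * (1:ℝ) + (1:ℝ) * (f p.2 * f p.2))
      (P.prod P) := I1.add I2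
  have h1 : ∫ p : ℝ × ℝ, (f p.1 * f p.1) * (1:ℝ) ∂(P.prod P)
      = (∫ x, f x * f x ∂P) * (∫ _ : ℝ, (1:ℝ) ∂P) := integral_prod_mul (fun x => f x * f x) (fun _ => (1:ℝ))
  have h2 : ∫ p : ℝ × ℝ, (1:ℝ) * (f p.2 * f p.2) ∂(P.prod P)
      = (∫ _ : ℝ, (1:ℝ) ∂P) * (∫ x, f x * f x ∂P) := integral_prod_mul (fun _ => (1:ℝ)) (fun x => f x * f x)
  have h3 : ∫ p : ℝ × ℝ, (2 * f p.1) * f p.2 ∂(P.prod P)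
      = (∫ x, 2 * f x ∂P) * (∫ x, f x ∂P) := integral_prod_mul (fun x => 2 * f x) f
  rw [hfun, integral_sub I12 I3, integral_add I1 I2, h1, h2, h3,
    MeasureTheory.integral_const_mul]
  simp only [integral_const, measure_univ, ENNReal.toReal_one, probReal_univ, one_smul, smul_eq_mul]
  have : ∫ x, f x * f x ∂P = ∫ x, f x ^ 2 ∂P := by simp [sq]
  rw [this]; ring

lemma diff_sq_integrable (f : ℝ → ℝ) (hf : Integrable f P)
    (hf2 : Integrable (fun x => f x ^ 2) P) :
    Integrable (fun p : ℝ × ℝ => (f p.1 - f p.2) ^ 2) (P.prod P) := by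
  have hff : Integrable (fun x => f x * f x) P := by simpa [sq] using hf2
  have I1 : Integrable (fun p : ℝ × ℝ => (f p.1 * f p.1) * (1:ℝ)) (P.prod P) :=
    hff.mul_prod (integrable_const 1)
  have I2 : Integrable (fun p : ℝ × ℝ => (1:ℝ) * (f p.2 * f p.2)) (P.prod P) :=
    (integrable_const 1).mul_prod hff
  have I3 : Integrable (fun p : ℝ × ℝ => (2 * f p.1) * f p.2) (P.prod P) :=
    (hf.const_mul 2).mul_prod hf
  have hfun : (fun p : ℝ × ℝ => (f p.1 - f p.2) ^ 2)
      = fun p : ℝ × ℝ => ((f p.1 * f p.1) * (1:ℝ) + (1:ℝ) * (f p.2 * f p.2))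
        - (2 * f p.1) * f p.2 := by
    funext p; ring
  rw [hfun]
  exact (I1.add I2).sub I3

end


/-- Dispersive order implies the variance inequality: if the difference of
quantile functions `t ↦ G⁻¹(t) - F⁻¹(t)` is increasing on `(0,1)` (i.e.
`X ≤_disp Y` for `X ∼ μ`, `Y ∼ ν`), and both distributions have finite second
moments, then `Var(X) ≤ Var(Y)`. -/
theorem stmt_19 (μ ν : Measure ℝ)
    [IsProbabilityMeasure μ] [IsProbabilityMeasure ν]
    (hμ1 : Integrable (fun x => x) μ) (hν1 : Integrable (fun x => x) ν)
    (hμ2 : Integrable (fun x => x ^ 2) μ) (hν2 : Integrable (fun x => x ^ 2) ν)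
    (hdisp : MonotoneOn (fun t => rcQuantile ν t - rcQuantile μ t) (Ioo (0:ℝ) 1)) :
    (∫ x, x ^ 2 ∂μ) - (∫ x, x ∂μ) ^ 2 ≤ (∫ x, x ^ 2 ∂ν) - (∫ x, x ∂ν) ^ 2 := by
  set P : Measure ℝ := volume.restrict (Ioo (0:ℝ) 1) with hPdef
  haveI hP : IsProbabilityMeasure P := ⟨by simp [hPdef]⟩
  set f := rcQuantile μ with hfdef
  set g := rcQuantile ν with hgdef
  have hmf : AEMeasurable f P :=
    aemeasurable_restrict_of_monotoneOn measurableSet_Ioo (rcQ_monotoneOn μ)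
  have hmg : AEMeasurable g P :=
    aemeasurable_restrict_of_monotoneOn measurableSet_Ioo (rcQ_monotoneOn ν)
  have hμmap : Measure.map f P = μ := rcQ_map μ
  have hνmap : Measure.map g P = ν := rcQ_map ν
  -- transfer integrability
  have hIf : Integrable f P := by
    rw [← hμmap] at hμ1
    simpa [Function.comp] using
      (integrable_map_measure measurable_id.aestronglyMeasurable hmf).1 hμ1
  have hIf2 : Integrable (fun t => f t ^ 2) P := by
    rw [← hμmap] at hμ2
    simpa [Function.comp_def] using
      (integrable_map_measure (measurable_id.pow_const 2).aestronglyMeasurable hmf).1 hμ2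
  have hIg : Integrable g P := by
    rw [← hνmap] at hν1
    simpa [Function.comp] using
      (integrable_map_measure measurable_id.aestronglyMeasurable hmg).1 hν1
  have hIg2 : Integrable (fun t => g t ^ 2) P := by
    rw [← hνmap] at hν2
    simpa [Function.comp_def] using
      (integrable_map_measure (measurable_id.pow_const 2).aestronglyMeasurable hmg).1 hν2
  -- transfer integrals
  have hEf : ∫ x, x ∂μ = ∫ t, f t ∂P := by
    rw [← hμmap]
    exact integral_map hmf measurable_id.aestronglyMeasurable
  have hEf2 : ∫ x, x ^ 2 ∂μ = ∫ t, f t ^ 2 ∂P := by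
    rw [← hμmap]
    exact integral_map hmf (measurable_id.pow_const 2).aestronglyMeasurable
  have hEg : ∫ x, x ∂ν = ∫ t, g t ∂P := by
    rw [← hνmap]
    exact integral_map hmg measurable_id.aestronglyMeasurable
  have hEg2 : ∫ x, x ^ 2 ∂ν = ∫ t, g t ^ 2 ∂P := by
    rw [← hνmap]
    exact integral_map hmg (measurable_id.pow_const 2).aestronglyMeasurable
  -- variance identities
  have Iμ := var_identity (P := P) f hIf hIf2
  have Iν := var_identity (P := P) g hIg hIg2
  -- pointwise comparison
  have key : ∀ u ∈ Ioo (0:ℝ) 1, ∀ v ∈ Ioo (0:ℝ) 1,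
      (f u - f v) ^ 2 ≤ (g u - g v) ^ 2 := by
    have main : ∀ u ∈ Ioo (0:ℝ) 1, ∀ v ∈ Ioo (0:ℝ) 1, u ≤ v →
        (f u - f v) ^ 2 ≤ (g u - g v) ^ 2 := by
      intro u hu v hv huv
      have h1 : 0 ≤ f v - f u := sub_nonneg.2 (rcQ_monotoneOn μ hu hv huv)
      have h2 : f v - f u ≤ g v - g u := by
        have := hdisp hu hv huv
        simp only at this
        linarith
      calc (f u - f v) ^ 2 = (f v - f u) ^ 2 := by ring
        _ ≤ (g v - g u) ^ 2 := pow_le_pow_left₀ h1 h2 2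
        _ = (g u - g v) ^ 2 := by ring
    intro u hu v hv
    rcases le_total u v with h | h
    · exact main u hu v hv h
    · have := main v hv u hu h
      calc (f u - f v) ^ 2 = (f v - f u) ^ 2 := by ring
        _ ≤ (g v - g u) ^ 2 := this
        _ = (g u - g v) ^ 2 := by ring
  have hmono : ∫ p : ℝ × ℝ, (f p.1 - f p.2) ^ 2 ∂(P.prod P)
      ≤ ∫ p : ℝ × ℝ, (g p.1 - g p.2) ^ 2 ∂(P.prod P) := by
    refine integral_mono_ae (diff_sq_integrable f hIf hIf2)
      (diff_sq_integrable g hIg hIg2) ?_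
    have hprod : P.prod P
        = (volume.prod volume).restrict ((Ioo (0:ℝ) 1) ×ˢ (Ioo (0:ℝ) 1)) := by
      rw [hPdef, Measure.prod_restrict]
    rw [hprod]
    filter_upwards [ae_restrict_mem (measurableSet_Ioo.prod measurableSet_Ioo)] with p hp
    exact key p.1 hp.1 p.2 hp.2
  rw [hEf, hEf2, hEg, hEg2]
  linarith [Iμ, Iν, hmono]
end
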